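/- Let G be a (P_4 + sP_2)-saturated graph whose nontrivial components all have order at least 6 and minimum degree at least 2 (over the union Q of nontrivial components), and suppose the matching number of Q is at least s + 1. Then the matching number of Q is exactly s + 1. -/

import Mathlib

open SimpleGraph

/-- `H` has an (injective) copy inside `G`, i.e. `G` contains `H` as a subgraph. -/
def IsSubCopy {W V : Type*} (H : SimpleGraph W) (G : SimpleGraph V) : Prop :=
  ∃ f : H →g G, Function.Injective f

/-- `G` is `H`-saturated: it contains no copy of `H`, but adding any missing edge creates one. -/
def Saturated {V W : Type*} (G : SimpleGraph V) (H : SimpleGraph W) : Prop :=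
  ¬ IsSubCopy H G ∧ ∀ v w : V, v ≠ w → ¬ G.Adj v w →
    IsSubCopy H (G ⊔ fromEdgeSet {s(v, w)})

/-- The linear forest `P_k + t·P_2`. -/
def pathMatch (k t : ℕ) : SimpleGraph (Fin k ⊕ Fin t × Fin 2) :=
  fromRel (fun x y =>
    (∃ a b : Fin k, (pathGraph k).Adj a b ∧ x = Sum.inl a ∧ y = Sum.inl b) ∨
    (∃ i : Fin t, x = Sum.inr (i, 0) ∧ y = Sum.inr (i, 1)))

/-- The book `B_k`: `k` triangles sharing a common edge (vertices `0` and `1`). -/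
def bookGraph (k : ℕ) : SimpleGraph (Fin (k + 2)) :=
  fromRel (fun x _ => x = 0 ∨ x = 1)

/-- The fan `F_k`: `k` triangles sharing the common vertex `0`. -/
def fanGraph (k : ℕ) : SimpleGraph (Fin (2 * k + 1)) :=
  fromRel (fun x y => x = 0 ∨ ∃ i < k, (x : ℕ) = 2 * i + 1 ∧ (y : ℕ) = 2 * i + 2)

/-- `K_7 + (t-1)K_3 + m·K_1`. -/
def extremalGraph (t m : ℕ) : SimpleGraph (Fin 7 ⊕ (Fin (t - 1) × Fin 3) ⊕ Fin m) :=
  fromRel (fun x y =>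
    (∃ a b : Fin 7, x = Sum.inl a ∧ y = Sum.inl b) ∨
    (∃ (i : Fin (t - 1)) (a b : Fin 3),
      x = Sum.inr (Sum.inl (i, a)) ∧ y = Sum.inr (Sum.inl (i, b))))

/-- The spider tree `T` on 10 vertices: a center `0` joined to `1,2,3`, each of which
gets two further leaves. -/
def spiderT : SimpleGraph (Fin 10) :=
  fromRel (fun x y => ((x : ℕ), (y : ℕ)) ∈
    [(0,1),(0,2),(0,3),(1,4),(1,5),(2,6),(2,7),(3,8),(3,9)])

/-- A connected component is nontrivial if it contains a non-isolated vertex (i.e. an edge). -/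
def NontrivialComp {V : Type*} (G : SimpleGraph V) (C : G.ConnectedComponent) : Prop :=
  ∃ v ∈ C.supp, v ∈ G.support



section AuxStatement14
variable {V : Type*}

lemma aux_walk_crossing (G : SimpleGraph V) (S : Set V) :
    ∀ {x y : V}, G.Walk x y → x ∈ S → y ∉ S → ∃ p q, G.Adj p q ∧ p ∈ S ∧ q ∉ S := by
  intro x y w
  induction w with
  | nil => intro hx hy; exact absurd hx hy
  | @cons a b c h p ih =>
    intro hx hy
    by_cases hb : b ∈ S
    · exact ih hb hy
    · exact ⟨a, b, h, hx, hb⟩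

lemma aux_vec_inj (w x y z : V) (h1 : w ≠ x) (h2 : w ≠ y) (h3 : w ≠ z)
    (h4 : x ≠ y) (h5 : x ≠ z) (h6 : y ≠ z) : Function.Injective (![w,x,y,z]) := by
  intro a b hab
  fin_cases a <;> fin_cases b <;> simp only [Matrix.cons_val_zero, Matrix.cons_val_one,
    Matrix.head_cons, Matrix.cons_val_two, Matrix.tail_cons, Matrix.cons_val_three] at hab ⊢ <;>
    first
      | rfl
      | exact absurd hab h1 | exact absurd hab.symm h1
      | exact absurd hab h2 | exact absurd hab.symm h2
      | exact absurd hab h3 | exact absurd hab.symm h3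
      | exact absurd hab h4 | exact absurd hab.symm h4
      | exact absurd hab h5 | exact absurd hab.symm h5
      | exact absurd hab h6 | exact absurd hab.symm h6

lemma aux_vec_mem (w x y z : V) (a : Fin 4) :
    ![w,x,y,z] a = w ∨ ![w,x,y,z] a = x ∨ ![w,x,y,z] a = y ∨ ![w,x,y,z] a = z := by
  fin_cases a <;> simp

lemma aux_vec_adj (G : SimpleGraph V) (w x y z : V)
    (hwx : G.Adj w x) (hxy : G.Adj x y) (hyz : G.Adj y z) (a b : Fin 4)
    (hab : (pathGraph 4).Adj a b) : G.Adj (![w,x,y,z] a) (![w,x,y,z] b) := by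
  rw [pathGraph_adj] at hab
  fin_cases a <;> fin_cases b <;> simp only [Matrix.cons_val_zero, Matrix.cons_val_one,
    Matrix.head_cons, Matrix.cons_val_two, Matrix.tail_cons, Matrix.cons_val_three] <;>
    first
      | exact hwx | exact hxy | exact hyz
      | exact hwx.symm | exact hxy.symm | exact hyz.symm
      | (exfalso; revert hab; decide)

lemma aux_buildCopy (G : SimpleGraph V) (s : ℕ) (w x y z : V)
    (hwx : G.Adj w x) (hxy : G.Adj x y) (hyz : G.Adj y z)
    (hwy : w ≠ y) (hwz : w ≠ z) (hxz : x ≠ z)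
    (u v : Fin s → V) (hadj : ∀ i, G.Adj (u i) (v i))
    (hdisj : ∀ i j, i ≠ j → u i ≠ u j ∧ u i ≠ v j ∧ v i ≠ u j ∧ v i ≠ v j)
    (havoid : ∀ i, ∀ t, (t = w ∨ t = x ∨ t = y ∨ t = z) → u i ≠ t ∧ v i ≠ t) :
    IsSubCopy (pathMatch 4 s) G := by
  classical
  let F : Fin 4 ⊕ Fin s × Fin 2 → V :=
    Sum.elim (![w, x, y, z]) (fun p => if p.2 = 0 then u p.1 else v p.1)
  have hFl : ∀ a : Fin 4, F (Sum.inl a) = ![w, x, y, z] a := fun a => rfl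
  have hFu : ∀ (i : Fin s) (j : Fin 2), F (Sum.inr (i, j)) = if j = 0 then u i else v i :=
    fun i j => rfl
  have hinrval : ∀ (i : Fin s) (j : Fin 2), F (Sum.inr (i, j)) = u i ∨ F (Sum.inr (i, j)) = v i := by
    intro i j
    rw [hFu]
    by_cases h : j = 0
    · rw [if_pos h]; exact Or.inl rfl
    · rw [if_neg h]; exact Or.inr rfl
  have claim : ∀ A B : Fin 4 ⊕ Fin s × Fin 2,
      ((∃ a b : Fin 4, (pathGraph 4).Adj a b ∧ A = Sum.inl a ∧ B = Sum.inl b) ∨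
       (∃ i : Fin s, A = Sum.inr (i, 0) ∧ B = Sum.inr (i, 1))) → G.Adj (F A) (F B) := by
    rintro A B (⟨a, b, hab, rfl, rfl⟩ | ⟨i, rfl, rfl⟩)
    · rw [hFl, hFl]
      exact aux_vec_adj G w x y z hwx hxy hyz a b hab
    · rw [hFu, hFu, if_pos rfl, if_neg (by decide)]
      exact hadj i
  have hinj : Function.Injective F := by
    have hvinj := aux_vec_inj w x y z hwx.ne hwy hwz hxy.ne hxz hyz.ne
    rintro (a | ⟨i, j⟩) (b | ⟨k, l⟩) hab
    · rw [hFl, hFl] at hab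
      rw [hvinj hab]
    · exfalso
      rw [hFl] at hab
      rcases hinrval k l with h | h <;> rw [h] at hab
      · exact (havoid k _ (aux_vec_mem w x y z a)).1 hab.symm
      · exact (havoid k _ (aux_vec_mem w x y z a)).2 hab.symm
    · exfalso
      rw [hFl] at hab
      rcases hinrval i j with h | h <;> rw [h] at hab
      · exact (havoid i _ (aux_vec_mem w x y z b)).1 hab
      · exact (havoid i _ (aux_vec_mem w x y z b)).2 hab
    · have hik : i = k := by
        by_contra hik
        obtain ⟨h1, h2, h3, h4⟩ := hdisj i k hik
        rcases hinrval i j with h | h <;> rcases hinrval k l with h' | h' <;>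
          rw [h, h'] at hab <;> tauto
      subst hik
      have hjl : j = l := by
        by_contra hjl
        have h0 : j = 0 ∨ j = 1 := by omega
        have h1 : l = 0 ∨ l = 1 := by omega
        rcases h0 with rfl | rfl <;> rcases h1 with rfl | rfl <;> try exact hjl rfl
        · rw [hFu, hFu, if_pos rfl, if_neg (by decide)] at hab
          exact (hadj i).ne hab
        · rw [hFu, hFu, if_pos rfl, if_neg (by decide)] at hab
          exact (hadj i).ne hab.symm
      rw [hjl]
  refine ⟨⟨F, ?_⟩, hinj⟩
  intro A B hAB
  rw [pathMatch, fromRel_adj] at hAB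
  rcases hAB.2 with h | h
  · exact claim A B h
  · exact (claim B A h).symm

lemma aux_select (G : SimpleGraph V) (s : ℕ) (w x y z : V)
    (hwx : G.Adj w x) (hxy : G.Adj x y) (hyz : G.Adj y z)
    (hwy : w ≠ y) (hwz : w ≠ z) (hxz : x ≠ z)
    (u v : Fin (s + 2) → V) (hadj : ∀ i, G.Adj (u i) (v i))
    (hdisj : ∀ i j, i ≠ j → u i ≠ u j ∧ u i ≠ v j ∧ v i ≠ u j ∧ v i ≠ v j)
    (B : Finset (Fin (s + 2))) (hB : B.card ≤ 2)
    (hav : ∀ k, k ∉ B → ∀ t, (t = w ∨ t = x ∨ t = y ∨ t = z) → u k ≠ t ∧ v k ≠ t) :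
    IsSubCopy (pathMatch 4 s) G := by
  classical
  have hcard : Fintype.card (Fin s) ≤ Fintype.card ↥(Bᶜ : Finset (Fin (s + 2))) := by
    rw [Fintype.card_fin, Fintype.card_coe, Finset.card_compl, Fintype.card_fin]
    omega
  obtain ⟨g⟩ : Nonempty (Fin s ↪ ↥(Bᶜ : Finset (Fin (s + 2)))) :=
    Function.Embedding.nonempty_of_card_le hcard
  have hg : ∀ m : Fin s, ((g m : ↥(Bᶜ : Finset (Fin (s + 2)))) : Fin (s + 2)) ∉ B := by
    intro m
    exact Finset.mem_compl.mp (g m).2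
  refine aux_buildCopy G s w x y z hwx hxy hyz hwy hwz hxz
    (fun m => u (g m)) (fun m => v (g m)) (fun m => hadj _) ?_ ?_
  · intro i j hij
    exact hdisj _ _ (fun h => hij (g.injective (Subtype.ext h)))
  · intro m t ht
    exact hav _ (hg m) t ht

lemma aux_case1 (G : SimpleGraph V) (s : ℕ)
    (u v : Fin (s + 2) → V) (hadj : ∀ i, G.Adj (u i) (v i))
    (hdisj : ∀ i j, i ≠ j → u i ≠ u j ∧ u i ≠ v j ∧ v i ≠ u j ∧ v i ≠ v j)
    (i j : Fin (s + 2)) (hij : i ≠ j) (a b c d : V)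
    (hedgei : (a = u i ∧ b = v i) ∨ (a = v i ∧ b = u i))
    (hedgej : (c = u j ∧ d = v j) ∨ (c = v j ∧ d = u j))
    (hbc : G.Adj b c) : IsSubCopy (pathMatch 4 s) G := by
  classical
  obtain ⟨d1, d2, d3, d4⟩ := hdisj i j hij
  have hAB : G.Adj a b := by
    rcases hedgei with ⟨rfl, rfl⟩ | ⟨rfl, rfl⟩
    exacts [hadj i, (hadj i).symm]
  have hCD : G.Adj c d := by
    rcases hedgej with ⟨rfl, rfl⟩ | ⟨rfl, rfl⟩
    exacts [hadj j, (hadj j).symm]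
  have hmemi : ∀ t, t = a ∨ t = b → t = u i ∨ t = v i := by
    rcases hedgei with ⟨rfl, rfl⟩ | ⟨rfl, rfl⟩ <;> tauto
  have hmemj : ∀ t, t = c ∨ t = d → t = u j ∨ t = v j := by
    rcases hedgej with ⟨rfl, rfl⟩ | ⟨rfl, rfl⟩ <;> tauto
  have hne : ∀ t t', (t = u i ∨ t = v i) → (t' = u j ∨ t' = v j) → t ≠ t' := by
    rintro t t' (rfl | rfl) (rfl | rfl) <;> first | exact d1 | exact d2 | exact d3 | exact d4
  refine aux_select G s a b c d hAB hbc hCD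
    (hne a c (hmemi a (Or.inl rfl)) (hmemj c (Or.inl rfl)))
    (hne a d (hmemi a (Or.inl rfl)) (hmemj d (Or.inr rfl)))
    (hne b d (hmemi b (Or.inr rfl)) (hmemj d (Or.inr rfl)))
    u v hadj hdisj {i, j} (le_trans (Finset.card_insert_le _ _) (by simp)) ?_
  intro k hk t ht
  have hki : k ≠ i := by rintro rfl; exact hk (by simp)
  have hkj : k ≠ j := by rintro rfl; exact hk (by simp)
  obtain ⟨e1, e2, e3, e4⟩ := hdisj k i hki
  obtain ⟨f1, f2, f3, f4⟩ := hdisj k j hkj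
  rcases ht with rfl | rfl | rfl | rfl
  · rcases hmemi t (Or.inl rfl) with h | h <;> rw [h] <;>
      first | exact ⟨e1, e3⟩ | exact ⟨e2, e4⟩
  · rcases hmemi t (Or.inr rfl) with h | h <;> rw [h] <;>
      first | exact ⟨e1, e3⟩ | exact ⟨e2, e4⟩
  · rcases hmemj t (Or.inl rfl) with h | h <;> rw [h] <;>
      first | exact ⟨f1, f3⟩ | exact ⟨f2, f4⟩
  · rcases hmemj t (Or.inr rfl) with h | h <;> rw [h] <;>
      first | exact ⟨f1, f3⟩ | exact ⟨f2, f4⟩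

lemma aux_main [Fintype V] (G : SimpleGraph V) (s : ℕ)
    (hdel : ∀ v ∈ G.support, 2 ≤ (G.neighborSet v).ncard)
    (hcomp6 : ∀ C : G.ConnectedComponent, NontrivialComp G C → 6 ≤ C.supp.ncard)
    (u v : Fin (s + 2) → V) (hadj : ∀ i, G.Adj (u i) (v i))
    (hdisj : ∀ i j, i ≠ j → u i ≠ u j ∧ u i ≠ v j ∧ v i ≠ u j ∧ v i ≠ v j) :
    IsSubCopy (pathMatch 4 s) G := by
  classical
  by_cases hc1 : ∃ i j : Fin (s + 2), i ≠ j ∧ ∃ p q, G.Adj p q ∧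
      (p = u i ∨ p = v i) ∧ (q = u j ∨ q = v j)
  · obtain ⟨i, j, hij, p, q, hpq, hp, hq⟩ := hc1
    rcases hp with rfl | rfl <;> rcases hq with rfl | rfl
    · exact aux_case1 G s u v hadj hdisj i j hij (v i) (u i) (u j) (v j)
        (Or.inr ⟨rfl, rfl⟩) (Or.inl ⟨rfl, rfl⟩) hpq
    · exact aux_case1 G s u v hadj hdisj i j hij (v i) (u i) (v j) (u j)
        (Or.inr ⟨rfl, rfl⟩) (Or.inr ⟨rfl, rfl⟩) hpq
    · exact aux_case1 G s u v hadj hdisj i j hij (u i) (v i) (u j) (v j)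
        (Or.inl ⟨rfl, rfl⟩) (Or.inl ⟨rfl, rfl⟩) hpq
    · exact aux_case1 G s u v hadj hdisj i j hij (u i) (v i) (v j) (u j)
        (Or.inl ⟨rfl, rfl⟩) (Or.inr ⟨rfl, rfl⟩) hpq
  · push_neg at hc1
    set i0 : Fin (s + 2) := 0 with hi0
    set a : V := u i0 with ha
    set b : V := v i0 with hb0
    have hab : G.Adj a b := hadj i0
    have hcross : ∀ (i j : Fin (s + 2)) (p q : V), G.Adj p q → (p = u i ∨ p = v i) →
        (q = u j ∨ q = v j) → i = j := by
      intro i j p q h1 h2 h3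
      by_contra hne
      rcases h3 with h3 | h3
      · exact (hc1 i j hne p q h1 h2).1 h3
      · exact (hc1 i j hne p q h1 h2).2 h3
    have hA : ∀ c, G.Adj a c → c ≠ b → ∀ k, c ≠ u k ∧ c ≠ v k := by
      intro c hc hcb k
      constructor
      · intro h
        have hik := hcross i0 k a c hc (Or.inl rfl) (Or.inl h)
        apply hc.ne
        rw [h, ← hik]
      · intro h
        have hik := hcross i0 k a c hc (Or.inl rfl) (Or.inr h)
        apply hcb
        rw [h, ← hik]
    have hB : ∀ d, G.Adj b d → d ≠ a → ∀ k, d ≠ u k ∧ d ≠ v k := by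
      intro d hd hda k
      constructor
      · intro h
        have hik := hcross i0 k b d hd (Or.inr rfl) (Or.inl h)
        apply hda
        rw [h, ← hik]
      · intro h
        have hik := hcross i0 k b d hd (Or.inr rfl) (Or.inr h)
        apply hd.ne
        rw [h, ← hik]
    have hexc : ∃ c, G.Adj a c ∧ c ≠ b := by
      by_contra h
      push_neg at h
      have hsub : G.neighborSet a ⊆ {b} := by
        intro t ht
        simp only [Set.mem_singleton_iff]
        exact h t ht
      have h1 : (G.neighborSet a).ncard ≤ 1 := by
        have := Set.ncard_le_ncard hsub (Set.finite_singleton b)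
        simpa using this
      have h2 := hdel a ⟨b, hab⟩
      omega
    have hexd : ∃ d, G.Adj b d ∧ d ≠ a := by
      by_contra h
      push_neg at h
      have hsub : G.neighborSet b ⊆ {a} := by
        intro t ht
        simp only [Set.mem_singleton_iff]
        exact h t ht
      have h1 : (G.neighborSet b).ncard ≤ 1 := by
        have := Set.ncard_le_ncard hsub (Set.finite_singleton a)
        simpa using this
      have h2 := hdel b ⟨a, hab.symm⟩
      omega
    by_cases h2a : ∃ c d, G.Adj a c ∧ G.Adj b d ∧ c ≠ b ∧ d ≠ a ∧ c ≠ d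
    · obtain ⟨c, d, hc, hd, hcb, hda, hcd⟩ := h2a
      refine aux_select G s c a b d hc.symm hab hd hcb hcd (Ne.symm hda)
        u v hadj hdisj {i0} (by simp) ?_
      intro k hk t ht
      have hki : k ≠ i0 := by rintro rfl; exact hk (by simp)
      obtain ⟨e1, e2, e3, e4⟩ := hdisj k i0 hki
      obtain ⟨g1, g2⟩ := hA c hc hcb k
      obtain ⟨g3, g4⟩ := hB d hd hda k
      rcases ht with rfl | rfl | rfl | rfl
      · exact ⟨Ne.symm g1, Ne.symm g2⟩
      · exact ⟨e1, e3⟩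
      · exact ⟨e2, e4⟩
      · exact ⟨Ne.symm g3, Ne.symm g4⟩
    · push_neg at h2a
      obtain ⟨c, hc, hcb⟩ := hexc
      obtain ⟨d, hd, hda⟩ := hexd
      have hcd : c = d := h2a c d hc hd hcb hda
      subst hcd
      have hca : c ≠ a := hc.ne'
      have hNa : ∀ e, G.Adj a e → e = b ∨ e = c := by
        intro e he
        by_contra h
        push_neg at h
        exact h.2 (h2a e c he hd h.1 hca)
      have hNb : ∀ e, G.Adj b e → e = a ∨ e = c := by
        intro e he
        by_contra h
        push_neg at h
        exact (Ne.symm h.2) (h2a c e hc he hcb h.1)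
      set C := G.connectedComponentMk a with hC
      have hCnt : NontrivialComp G C := ⟨a, rfl, ⟨b, hab⟩⟩
      have hC6 := hcomp6 C hCnt
      have hSfin : ({a, b, c} : Set V).Finite := Set.toFinite _
      have hnsub : ¬ C.supp ⊆ {a, b, c} := by
        intro hsub
        have h1 : C.supp.ncard ≤ ({a, b, c} : Set V).ncard := Set.ncard_le_ncard hsub hSfin
        have h2 : ({a, b, c} : Set V).ncard ≤ 3 := by
          refine le_trans (Set.ncard_insert_le _ _) ?_
          have := Set.ncard_insert_le b ({c} : Set V)
          simp only [Set.ncard_singleton] at this ⊢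
          omega
        omega
      obtain ⟨y0, hy0C, hy0S⟩ : ∃ y0 ∈ C.supp, y0 ∉ ({a, b, c} : Set V) := by
        by_contra h
        push_neg at h
        exact hnsub h
      have hreach : G.Reachable a y0 := by
        have : G.connectedComponentMk y0 = G.connectedComponentMk a := hy0C
        exact (SimpleGraph.ConnectedComponent.exact this).symm
      obtain ⟨W⟩ := hreach
      have haS : a ∈ ({a, b, c} : Set V) := by simp
      obtain ⟨p, q, hpq, hpS, hqS⟩ := aux_walk_crossing G {a, b, c} W haS hy0S
      have hp3 : p = a ∨ p = b ∨ p = c := by simpa using hpS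
      have hqa : q ≠ a := fun h => hqS (by simp [h])
      have hqb : q ≠ b := fun h => hqS (by simp [h])
      have hqc : q ≠ c := fun h => hqS (by simp [h])
      rcases hp3 with hpa | hpb | hpc
      · rw [hpa] at hpq
        rcases hNa q hpq with h | h
        · exact absurd h hqb
        · exact absurd h hqc
      · rw [hpb] at hpq
        rcases hNb q hpq with h | h
        · exact absurd h hqa
        · exact absurd h hqc
      · rw [hpc] at hpq
        refine aux_select G s q c a b hpq.symm hc.symm hab
          hqa hqb hcb
          u v hadj hdisj (insert i0 (Finset.univ.filter fun k => u k = q ∨ v k = q)) ?_ ?_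
        · refine le_trans (Finset.card_insert_le _ _) ?_
          have hle1 : (Finset.univ.filter fun k => u k = q ∨ v k = q).card ≤ 1 := by
            rw [Finset.card_le_one]
            intro k hk l hl
            simp only [Finset.mem_filter] at hk hl
            by_contra hkl
            obtain ⟨m1, m2, m3, m4⟩ := hdisj k l hkl
            rcases hk.2 with h | h <;> rcases hl.2 with h' | h' <;> rw [← h'] at h <;> tauto
          omega
        · intro k hk t ht
          simp only [Finset.mem_insert, Finset.mem_filter, Finset.mem_univ, true_and,
            not_or] at hk
          obtain ⟨hki, hkq⟩ := hk
          push_neg at hkq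
          obtain ⟨e1, e2, e3, e4⟩ := hdisj k i0 hki
          obtain ⟨g1, g2⟩ := hA c hc hcb k
          rcases ht with rfl | rfl | rfl | rfl
          · exact hkq
          · exact ⟨Ne.symm g1, Ne.symm g2⟩
          · exact ⟨e1, e3⟩
          · exact ⟨e2, e4⟩

lemma aux_matching_disjoint {V' : Type*} {Q : SimpleGraph V'} {M : Q.Subgraph}
    (hM : M.IsMatching) {a b c d : V'} (hab : M.Adj a b) (hcd : M.Adj c d)
    (hne : s(a, b) ≠ s(c, d)) : a ≠ c ∧ a ≠ d ∧ b ≠ c ∧ b ≠ d := by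
  refine ⟨?_, ?_, ?_, ?_⟩
  · rintro rfl
    obtain ⟨w, -, huniq⟩ := hM (M.edge_vert hab)
    exact hne (by rw [(huniq b hab).trans (huniq d hcd).symm])
  · rintro rfl
    obtain ⟨w, -, huniq⟩ := hM (M.edge_vert hab)
    have := (huniq b hab).trans (huniq c hcd.symm).symm
    exact hne (by rw [this, Sym2.eq_swap])
  · rintro rfl
    obtain ⟨w, -, huniq⟩ := hM (M.edge_vert hab.symm)
    have := (huniq a hab.symm).trans (huniq d hcd).symm
    exact hne (by rw [this, Sym2.eq_swap])
  · rintro rfl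
    obtain ⟨w, -, huniq⟩ := hM (M.edge_vert hab.symm)
    have := (huniq a hab.symm).trans (huniq c hcd.symm).symm
    exact hne (by rw [this])

lemma aux_extract [Fintype V] (G : SimpleGraph V) (n : ℕ)
    (M : (G.induce G.support).Subgraph) (hM : M.IsMatching) (hn : n ≤ M.edgeSet.ncard) :
    ∃ u v : Fin n → V, (∀ i, G.Adj (u i) (v i)) ∧
      ∀ i j, i ≠ j → u i ≠ u j ∧ u i ≠ v j ∧ v i ≠ u j ∧ v i ≠ v j := by
  classical
  haveI : Fintype ↥M.edgeSet := (Set.toFinite _).fintype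
  have hcard : Fintype.card (Fin n) ≤ Fintype.card ↥M.edgeSet := by
    rw [Fintype.card_fin]
    rwa [Set.ncard_eq_toFinset_card', Set.toFinset_card] at hn
  obtain ⟨g⟩ : Nonempty (Fin n ↪ ↥M.edgeSet) := Function.Embedding.nonempty_of_card_le hcard
  have h : ∀ i : Fin n, ∃ ab : ↥G.support × ↥G.support,
      (g i : Sym2 ↥G.support) = s(ab.1, ab.2) ∧ M.Adj ab.1 ab.2 := by
    intro i
    have hmem : (g i : Sym2 ↥G.support) ∈ M.edgeSet := (g i).2
    revert hmem
    induction (g i : Sym2 ↥G.support) using Sym2.ind with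
    | _ p q => exact fun hmem => ⟨(p, q), rfl, SimpleGraph.Subgraph.mem_edgeSet.mp hmem⟩
  choose ab hab hAdj using h
  refine ⟨fun i => ((ab i).1 : V), fun i => ((ab i).2 : V), ?_, ?_⟩
  · intro i
    exact M.adj_sub (hAdj i)
  · intro i j hij
    have hgij : (g i : Sym2 ↥G.support) ≠ (g j : Sym2 ↥G.support) := by
      intro h
      exact hij (g.injective (Subtype.ext h))
    have hne : s((ab i).1, (ab i).2) ≠ s((ab j).1, (ab j).2) := by
      rw [← hab i, ← hab j]
      exact hgij
    obtain ⟨h1, h2, h3, h4⟩ := aux_matching_disjoint hM (hAdj i) (hAdj j) hne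
    exact ⟨fun h => h1 (Subtype.ext h), fun h => h2 (Subtype.ext h),
      fun h => h3 (Subtype.ext h), fun h => h4 (Subtype.ext h)⟩

lemma aux_mk {V' : Type*} (Q : SimpleGraph V') (n : ℕ) (ub vb : Fin n → V')
    (hadj : ∀ i, Q.Adj (ub i) (vb i))
    (hubub : ∀ i j, ub i = ub j → i = j)
    (hvbvb : ∀ i j, vb i = vb j → i = j)
    (hubvb : ∀ i j, ub i = vb j → False) :
    ∃ M : Q.Subgraph, M.IsMatching ∧ M.edgeSet.ncard = n := by
  classical
  refine ⟨{
    verts := {x | ∃ i, x = ub i ∨ x = vb i}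
    Adj := fun x y => ∃ i, (x = ub i ∧ y = vb i) ∨ (x = vb i ∧ y = ub i)
    adj_sub := by
      rintro x y ⟨i, ⟨rfl, rfl⟩ | ⟨rfl, rfl⟩⟩
      · exact hadj i
      · exact (hadj i).symm
    edge_vert := by
      rintro x y ⟨i, ⟨rfl, rfl⟩ | ⟨rfl, rfl⟩⟩
      · exact ⟨i, Or.inl rfl⟩
      · exact ⟨i, Or.inr rfl⟩
    symm := by
      constructor
      rintro x y ⟨i, ⟨rfl, rfl⟩ | ⟨rfl, rfl⟩⟩
      · exact ⟨i, Or.inr ⟨rfl, rfl⟩⟩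
      · exact ⟨i, Or.inl ⟨rfl, rfl⟩⟩ }, ?_, ?_⟩
  · rintro x ⟨i, rfl | rfl⟩
    · refine ⟨vb i, ⟨i, Or.inl ⟨rfl, rfl⟩⟩, ?_⟩
      rintro y ⟨j, ⟨hx, rfl⟩ | ⟨hx, rfl⟩⟩
      · rw [hubub i j hx]
      · exact absurd hx (fun h => hubvb i j h)
    · refine ⟨ub i, ⟨i, Or.inr ⟨rfl, rfl⟩⟩, ?_⟩
      rintro y ⟨j, ⟨hx, rfl⟩ | ⟨hx, rfl⟩⟩
      · exact absurd hx (fun h => hubvb j i h.symm)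
      · rw [hvbvb i j hx]
  · have hset : SimpleGraph.Subgraph.edgeSet
        (G := Q)
        { verts := {x | ∃ i, x = ub i ∨ x = vb i}
          Adj := fun x y => ∃ i, (x = ub i ∧ y = vb i) ∨ (x = vb i ∧ y = ub i)
          adj_sub := by
            rintro x y ⟨i, ⟨rfl, rfl⟩ | ⟨rfl, rfl⟩⟩
            · exact hadj i
            · exact (hadj i).symm
          edge_vert := by
            rintro x y ⟨i, ⟨rfl, rfl⟩ | ⟨rfl, rfl⟩⟩
            · exact ⟨i, Or.inl rfl⟩
            · exact ⟨i, Or.inr rfl⟩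
          symm := by
            constructor
            rintro x y ⟨i, ⟨rfl, rfl⟩ | ⟨rfl, rfl⟩⟩
            · exact ⟨i, Or.inr ⟨rfl, rfl⟩⟩
            · exact ⟨i, Or.inl ⟨rfl, rfl⟩⟩ } = (fun i => s(ub i, vb i)) '' Set.univ := by
      apply Set.eq_of_subset_of_subset
      · intro e he
        revert he
        induction e using Sym2.ind with
        | _ p q =>
          intro he
          rw [SimpleGraph.Subgraph.mem_edgeSet] at he
          obtain ⟨i, ⟨rfl, rfl⟩ | ⟨rfl, rfl⟩⟩ := he
          · exact ⟨i, trivial, rfl⟩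
          · exact ⟨i, trivial, Sym2.eq_swap⟩
      · rintro e ⟨i, -, rfl⟩
        rw [SimpleGraph.Subgraph.mem_edgeSet]
        exact ⟨i, Or.inl ⟨rfl, rfl⟩⟩
    rw [hset]
    have hinj : Function.Injective (fun i => s(ub i, vb i)) := by
      intro i j h
      simp only [Sym2.eq_iff] at h
      rcases h with ⟨h1, h2⟩ | ⟨h1, h2⟩
      · exact hubub i j h1
      · exact absurd h1 (fun h => hubvb i j h)
    rw [Set.ncard_image_of_injective _ hinj, Set.ncard_univ, Nat.card_eq_fintype_card,
      Fintype.card_fin]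

lemma aux_build (G : SimpleGraph V) (n : ℕ) (u v : Fin n → V)
    (hadj : ∀ i, G.Adj (u i) (v i))
    (hdisj : ∀ i j, i ≠ j → u i ≠ u j ∧ u i ≠ v j ∧ v i ≠ u j ∧ v i ≠ v j) :
    ∃ M : (G.induce G.support).Subgraph, M.IsMatching ∧ M.edgeSet.ncard = n := by
  classical
  have hu : ∀ i, u i ∈ G.support := fun i => ⟨v i, hadj i⟩
  have hv : ∀ i, v i ∈ G.support := fun i => ⟨u i, (hadj i).symm⟩
  refine aux_mk (G.induce G.support) n (fun i => ⟨u i, hu i⟩) (fun i => ⟨v i, hv i⟩) ?_ ?_ ?_ ?_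
  · intro i
    exact hadj i
  · intro i j h
    by_contra hij
    exact (hdisj i j hij).1 (congrArg Subtype.val h)
  · intro i j h
    by_contra hij
    exact (hdisj i j hij).2.2.2 (congrArg Subtype.val h)
  · intro i j h
    have h' : u i = v j := congrArg Subtype.val h
    by_cases hij : i = j
    · subst hij; exact (hadj i).ne h'
    · exact (hdisj i j hij).2.1 h'

end AuxStatement14

/-- If `G` is `(P_4 + sP_2)`-saturated, the union `Q` of its nontrivial components has
minimum degree at least 2 and every nontrivial component has order at least 6, and the
matching number of `Q` is at least `s + 1`, then it equals exactly `s + 1`. -/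
theorem statement14 {V : Type*} [Fintype V] (G : SimpleGraph V) (s : ℕ)
    (hsat : Saturated G (pathMatch 4 s))
    (hdel : ∀ v ∈ G.support, 2 ≤ (G.neighborSet v).ncard)
    (hcomp6 : ∀ C : G.ConnectedComponent, NontrivialComp G C → 6 ≤ C.supp.ncard)
    (hge : ∃ M : (G.induce G.support).Subgraph, M.IsMatching ∧ s + 1 ≤ M.edgeSet.ncard) :
    (∃ M : (G.induce G.support).Subgraph, M.IsMatching ∧ M.edgeSet.ncard = s + 1) ∧
    ∀ M : (G.induce G.support).Subgraph, M.IsMatching → M.edgeSet.ncard ≤ s + 1 := by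
  constructor
  · obtain ⟨M, hM, hn⟩ := hge
    obtain ⟨u, v, hadj, hdisj⟩ := aux_extract G (s + 1) M hM hn
    exact aux_build G (s + 1) u v hadj hdisj
  · intro M hM
    by_contra h
    push_neg at h
    have h2 : s + 2 ≤ M.edgeSet.ncard := h
    obtain ⟨u, v, hadj, hdisj⟩ := aux_extract G (s + 2) M hM h2
    exact hsat.1 (aux_main G s hdel hcomp6 u v hadj hdisj)
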